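/- The measured impedance admits the representation Z₀(ω) = ρ₀ + ∫₀^T K(s)·( e^{−iωs} − (ωs e^{−iωs} − sin(ωs))/(2πn) ) ds. -/

import Mathlib

open Real Complex MeasureTheory intervalIntegral


lemma two_I_ne : (2*Complex.I : ℂ) ≠ 0 := by simp [Complex.I_ne_zero]

lemma norm_exp_neg_I_mul (a b : ℝ) : ‖Complex.exp (-Complex.I * a * b)‖ = 1 := by
  simp [Complex.norm_exp]

lemma sin2 (x : ℝ) : (Real.sin x : ℂ) * (2*Complex.I)
    = Complex.exp (Complex.I * x) - Complex.exp (-(Complex.I * x)) := by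
  rw [Complex.ofReal_sin, Complex.sin]
  rw [show (-(x:ℂ)) * Complex.I = -(Complex.I * x) by ring,
      show ((x:ℂ)) * Complex.I = Complex.I * x by ring]
  linear_combination (Complex.exp (-(Complex.I * (x:ℂ))) - Complex.exp (Complex.I * (x:ℂ))) * Complex.I_sq

lemma exp_prod_one (ω t : ℝ) :
    Complex.exp (Complex.I * ω * t) * Complex.exp (-Complex.I * ω * t) = 1 := by
  rw [← Complex.exp_add, show Complex.I * (ω:ℂ) * t + -Complex.I * ω * t = 0 by ring,
    Complex.exp_zero]

lemma exp_sq (ω t : ℝ) :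
    Complex.exp (-Complex.I * ω * t) * Complex.exp (-Complex.I * ω * t)
      = Complex.exp ((-2*Complex.I*ω) * t) := by
  rw [← Complex.exp_add]; congr 1; ring

lemma key1 (ω t : ℝ) : (Real.sin (ω*t) : ℂ) * Complex.exp (-Complex.I * ω * t)
    = (1 - Complex.exp ((-2*Complex.I*ω) * t)) / (2*Complex.I) := by
  have h1 := sin2 (ω*t)
  rw [show (Complex.I * ↑(ω*t)) = Complex.I * ω * t by push_cast; ring,
      show (-(Complex.I * (ω:ℂ) * (t:ℂ))) = -Complex.I * ω * t by ring] at h1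
  have h2 := exp_prod_one ω t
  have h3 := exp_sq ω t
  rw [eq_div_iff two_I_ne]
  linear_combination Complex.exp (-Complex.I * ↑ω * ↑t) * h1 + h2 - h3

lemma key2 (ω s t : ℝ) : (Real.sin (ω*(t-s)) : ℂ) * Complex.exp (-Complex.I * ω * t)
    = (Complex.exp (-Complex.I * ω * s)
        - Complex.exp (Complex.I * ω * s) * Complex.exp ((-2*Complex.I*ω) * t)) / (2*Complex.I) := by
  have hs := sin2 (ω*(t-s))
  have e1 : Complex.exp (Complex.I * ↑(ω*(t-s)))
      = Complex.exp (Complex.I * ω * t) * Complex.exp (-Complex.I * ω * s) := by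
    rw [← Complex.exp_add]; congr 1; push_cast; ring
  have e2 : Complex.exp (-(Complex.I * ↑(ω*(t-s))))
      = Complex.exp (-Complex.I * ω * t) * Complex.exp (Complex.I * ω * s) := by
    rw [← Complex.exp_add]; congr 1; push_cast; ring
  rw [e1, e2] at hs
  have h2 := exp_prod_one ω t
  have h3 := exp_sq ω t
  rw [eq_div_iff two_I_ne]
  linear_combination Complex.exp (-Complex.I * ↑ω * ↑t) * hs
    + Complex.exp (-Complex.I * ↑ω * ↑s) * h2
    - Complex.exp (Complex.I * ↑ω * ↑s) * h3
lemma hc_ne (ω : ℝ) (hω : ω ≠ 0) : (-2*Complex.I*(ω:ℂ)) ≠ 0 := by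
  simp [Complex.I_ne_zero, hω]

lemma intA (ω T : ℝ) (hω : ω ≠ 0) (h1 : Complex.exp ((-2*Complex.I*ω) * T) = 1) :
    ∫ t in (0:ℝ)..T, (Real.sin (ω*t) : ℂ) * Complex.exp (-Complex.I * ω * t)
      = T / (2*Complex.I) := by
  rw [integral_congr (fun t _ => key1 ω t)]
  have hi : IntervalIntegrable (fun t : ℝ => Complex.exp ((-2*Complex.I*ω) * t)) volume 0 T :=
    ((by fun_prop : Continuous fun t : ℝ => Complex.exp ((-2*Complex.I*ω) * t)).intervalIntegrable 0 T)
  rw [intervalIntegral.integral_div, integral_sub intervalIntegrable_const hi,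
    integral_exp_mul_complex (hc_ne ω hω), intervalIntegral.integral_const, h1]
  simp

lemma intJ (ω T s : ℝ) (hω : ω ≠ 0) (h1 : Complex.exp ((-2*Complex.I*ω) * T) = 1) :
    ∫ t in s..T, (Real.sin (ω*(t-s)) : ℂ) * Complex.exp (-Complex.I * ω * t)
      = (Complex.exp (-Complex.I * ω * s) * (T - s) + (Real.sin (ω*s) : ℂ)/ω)
          / (2*Complex.I) := by
  rw [integral_congr (fun t _ => key2 ω s t)]
  have hi : IntervalIntegrable (fun t : ℝ => Complex.exp (Complex.I*ω*s) * Complex.exp ((-2*Complex.I*ω) * t)) volume s T :=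
    ((by fun_prop : Continuous fun t : ℝ => Complex.exp (Complex.I*ω*s) * Complex.exp ((-2*Complex.I*ω) * t)).intervalIntegrable s T)
  rw [intervalIntegral.integral_div, integral_sub intervalIntegrable_const hi, intervalIntegral.integral_const,
    intervalIntegral.integral_const_mul, integral_exp_mul_complex (hc_ne ω hω), h1]
  have h2 := exp_prod_one ω s
  have h3 := exp_sq ω s
  have hs := sin2 (ω*s)
  rw [show (Complex.I * ↑(ω*s)) = Complex.I * ω * s by push_cast; ring,
      show (-(Complex.I * (ω:ℂ) * (s:ℂ))) = -Complex.I * ω * s by ring] at hs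
  have hωc : (ω:ℂ) ≠ 0 := Complex.ofReal_ne_zero.2 hω
  have e4 : Complex.exp (Complex.I*ω*s) * (1 - Complex.exp ((-2*Complex.I*ω) * s))
      = (Real.sin (ω*s) : ℂ) * (2*Complex.I) := by
    rw [← h3]
    linear_combination (-1 : ℂ) * hs + (-Complex.exp (-Complex.I*(ω:ℂ)*(s:ℂ))) * h2
  have e5 : Complex.exp (Complex.I*ω*s) * ((1 - Complex.exp ((-2*Complex.I*ω) * s))/(-2*Complex.I*ω))
      = -((Real.sin (ω*s) : ℂ)/ω) := by
    rw [← mul_div_assoc, e4]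
    field_simp
  rw [Complex.real_smul, e5]
  push_cast
  ring

/-- **Representation of the measured impedance.**
`Z₀(ω) = ρ₀ + ∫₀^T K(s) (e^{-iωs} - (ωs e^{-iωs} - sin ωs)/(2πn)) ds`. -/
theorem measured_impedance_representation
    (ω : ℝ) (hω : 0 < ω) (n : ℕ) (hn : 0 < n) (T : ℝ) (hT : T = 2 * π * n / ω)
    (ρ₀ : ℝ) (K : ℝ → ℝ) (hKmeas : Measurable K)
    (hKint : IntegrableOn K (Set.Icc (0 : ℝ) T))
    (U : ℝ → ℝ)
    (hU : ∀ t, U t = ρ₀ * Real.sin (ω * t) + ∫ s in (0 : ℝ)..t, K s * Real.sin (ω * (t - s)))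
    (Z₀ : ℂ)
    (hZ₀ : Z₀ = 2 * Complex.I / (T : ℂ) *
      ∫ t in (0 : ℝ)..T, (U t : ℂ) * Complex.exp (-Complex.I * ω * t)) :
    Z₀ = (ρ₀ : ℂ) + ∫ s in (0 : ℝ)..T, (K s : ℂ) *
      (Complex.exp (-Complex.I * ω * s) -
        ((ω : ℂ) * s * Complex.exp (-Complex.I * ω * s) - (Real.sin (ω * s) : ℂ)) /
          (2 * (π : ℂ) * n)) := by
  -- basic facts
  have hT0 : 0 < T := by rw [hT]; positivity
  have hωT : ω * T = 2 * π * n := by rw [hT]; field_simp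
  have hωTc : (ω:ℂ) * T = 2 * π * n := by exact_mod_cast congrArg Complex.ofReal hωT
  have hexp1 : Complex.exp ((-2*Complex.I*(ω:ℝ)) * T) = 1 := by
    rw [show ((-2*Complex.I*(ω:ℝ)) * (T:ℝ) : ℂ) = ((-2*n : ℤ) : ℂ) * (2*π*Complex.I) by
      push_cast; linear_combination (-2*Complex.I) * hωTc]
    exact Complex.exp_int_mul_two_pi_mul_I _
  -- set up Fubini
  set μ : Measure ℝ := volume.restrict (Set.Ioc (0:ℝ) T) with hμ
  haveI : IsFiniteMeasure μ := by
    constructor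
    rw [hμ, Measure.restrict_apply_univ, Real.volume_Ioc]
    exact ENNReal.ofReal_lt_top
  have hKIoc : Integrable K μ := hKint.mono_set Set.Ioc_subset_Icc_self
  set F : ℝ → ℝ → ℂ := fun t s =>
    if s ≤ t then (K s : ℂ) * (Real.sin (ω*(t-s)) : ℂ) * Complex.exp (-Complex.I * ω * t) else 0
    with hF
  have hFmeas : AEStronglyMeasurable (Function.uncurry F) (μ.prod μ) := by
    apply Measurable.aestronglyMeasurable
    apply Measurable.ite (measurableSet_le measurable_snd measurable_fst)
    · fun_prop
    · exact measurable_const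
  have hFint : Integrable (Function.uncurry F) (μ.prod μ) := by
    have hdom : Integrable (fun p : ℝ × ℝ => (1:ℝ) * |K p.2|) (μ.prod μ) :=
      (integrable_const (1:ℝ)).mul_prod hKIoc.abs
    refine Integrable.mono' (by simpa using hdom) hFmeas ?_
    filter_upwards with p
    by_cases h : p.2 ≤ p.1
    · simp only [Function.uncurry, hF, if_pos h, norm_mul, Complex.norm_real,
        norm_exp_neg_I_mul, mul_one, Real.norm_eq_abs]
      have h1 : |Real.sin (ω*(p.1-p.2))| ≤ 1 := Real.abs_sin_le_one _
      nlinarith [abs_nonneg (K p.2), abs_nonneg (Real.sin (ω*(p.1-p.2)))]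
    · simp [Function.uncurry, hF, if_neg h, abs_nonneg]
  have hswap := integral_integral_swap hFint
  -- identify inner integrals : left side
  have hL : ∀ t ∈ Set.Ioc (0:ℝ) T, (∫ s, F t s ∂μ)
      = ((∫ s in (0:ℝ)..t, K s * Real.sin (ω*(t-s)) : ℝ) : ℂ)
          * Complex.exp (-Complex.I * ω * t) := by
    intro t ht
    have h1 : (fun s => F t s) = (Set.Iic t).indicator
        (fun s => ((K s * Real.sin (ω*(t-s)) : ℝ) : ℂ) * Complex.exp (-Complex.I * ω * t)) := by
      funext s
      by_cases h : s ≤ t <;> simp [hF, Set.indicator, h, Set.mem_Iic] <;> push_cast <;> ring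
    rw [hμ, h1, setIntegral_indicator measurableSet_Iic, Set.Ioc_inter_Iic,
      min_eq_right ht.2, MeasureTheory.integral_mul_const, ← intervalIntegral.integral_of_le ht.1.le,
      intervalIntegral.integral_ofReal]
  -- identify inner integrals : right side
  have hR : ∀ s ∈ Set.Ioc (0:ℝ) T, (∫ t, F t s ∂μ)
      = (K s : ℂ) * ((Complex.exp (-Complex.I * ω * s) * (T - s) + (Real.sin (ω*s) : ℂ)/ω)
          / (2*Complex.I)) := by
    intro s hs
    have h1 : (fun t => F t s) = (Set.Ici s).indicator
        (fun t => (K s : ℂ) * ((Real.sin (ω*(t-s)) : ℂ) * Complex.exp (-Complex.I * ω * t))) := by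
      funext t
      by_cases h : s ≤ t <;> simp [hF, Set.indicator, h, Set.mem_Ici] <;> ring
    have h2 : Set.Ioc (0:ℝ) T ∩ Set.Ici s = Set.Icc s T := by
      ext t
      simp only [Set.mem_inter_iff, Set.mem_Ioc, Set.mem_Ici, Set.mem_Icc]
      constructor
      · rintro ⟨⟨_, h2⟩, h3⟩; exact ⟨h3, h2⟩
      · rintro ⟨h3, h2⟩; exact ⟨⟨lt_of_lt_of_le hs.1 h3, h2⟩, h3⟩
    rw [hμ, h1, setIntegral_indicator measurableSet_Ici, h2,
      integral_Icc_eq_integral_Ioc, MeasureTheory.integral_const_mul,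
      ← intervalIntegral.integral_of_le hs.2, intJ ω T s (ne_of_gt hω) hexp1]
  -- integrability of the convolution term
  have hVe : IntervalIntegrable (fun t => ((∫ s in (0:ℝ)..t, K s * Real.sin (ω*(t-s)) : ℝ) : ℂ)
      * Complex.exp (-Complex.I * ω * t)) volume 0 T := by
    rw [intervalIntegrable_iff_integrableOn_Ioc_of_le hT0.le]
    have h0 : Integrable (fun t => ∫ s, F t s ∂μ) μ := hFint.integral_prod_left
    exact (h0.congr ((ae_restrict_iff' measurableSet_Ioc).2
      (Filter.Eventually.of_forall hL))).mono_measure le_rfl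
  -- Fubini chain
  have hBeq : (∫ t in (0:ℝ)..T, ((∫ s in (0:ℝ)..t, K s * Real.sin (ω*(t-s)) : ℝ) : ℂ)
        * Complex.exp (-Complex.I * ω * t))
      = ∫ s in (0:ℝ)..T, (K s : ℂ) *
          ((Complex.exp (-Complex.I * ω * s) * (T - s) + (Real.sin (ω*s) : ℂ)/ω)
            / (2*Complex.I)) := by
    rw [intervalIntegral.integral_of_le hT0.le, intervalIntegral.integral_of_le hT0.le]
    calc ∫ t in Set.Ioc (0:ℝ) T, ((∫ s in (0:ℝ)..t, K s * Real.sin (ω*(t-s)) : ℝ) : ℂ)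
          * Complex.exp (-Complex.I * ω * t)
        = ∫ t, (∫ s, F t s ∂μ) ∂μ :=
          (setIntegral_congr_fun measurableSet_Ioc hL).symm
      _ = ∫ s, (∫ t, F t s ∂μ) ∂μ := hswap
      _ = ∫ s in Set.Ioc (0:ℝ) T, (K s : ℂ) *
          ((Complex.exp (-Complex.I * ω * s) * (T - s) + (Real.sin (ω*s) : ℂ)/ω)
            / (2*Complex.I)) := setIntegral_congr_fun measurableSet_Ioc hR
  -- split the main integral
  have hsplit : (∫ t in (0:ℝ)..T, (U t : ℂ) * Complex.exp (-Complex.I * ω * t))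
      = (ρ₀ : ℂ) * (T / (2*Complex.I))
        + ∫ s in (0:ℝ)..T, (K s : ℂ) *
          ((Complex.exp (-Complex.I * ω * s) * (T - s) + (Real.sin (ω*s) : ℂ)/ω)
            / (2*Complex.I)) := by
    have hptw : ∀ t ∈ Set.uIcc (0:ℝ) T, (U t : ℂ) * Complex.exp (-Complex.I * ω * t)
        = (ρ₀ : ℂ) * ((Real.sin (ω*t) : ℂ) * Complex.exp (-Complex.I * ω * t))
          + ((∫ s in (0:ℝ)..t, K s * Real.sin (ω*(t-s)) : ℝ) : ℂ)
              * Complex.exp (-Complex.I * ω * t) := by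
      intro t _
      rw [hU t]; push_cast; ring
    rw [intervalIntegral.integral_congr hptw, intervalIntegral.integral_add
      (((by fun_prop : Continuous fun t : ℝ => (ρ₀ : ℂ) * ((Real.sin (ω*t) : ℂ)
          * Complex.exp (-Complex.I * ω * t))).intervalIntegrable 0 T)) hVe,
      intervalIntegral.integral_const_mul, intA ω T (ne_of_gt hω) hexp1, hBeq]
  -- conclusion
  have hTne : (T : ℂ) ≠ 0 := Complex.ofReal_ne_zero.2 (ne_of_gt hT0)
  have hωne : (ω : ℂ) ≠ 0 := Complex.ofReal_ne_zero.2 (ne_of_gt hω)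
  rw [hZ₀, hsplit, mul_add, ← intervalIntegral.integral_const_mul]
  congr 1
  · field_simp
  · apply intervalIntegral.integral_congr
    intro s _
    have h2pn : (2 * (π:ℂ) * n) = (ω:ℂ) * T := hωTc.symm
    rw [h2pn]
    field_simp
    ring
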